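/- Suppose f₂ : (S¹×S¹)⁵ → ℝ is an alternating simplicial cocycle that vanishes on all 5-tuples z with n₁(z) + n₂(z) ≤ 7, where nᵢ(z) counts the distinct i-th coordinates of the entries of z. Then for any ((x₁,y₁),…,(x₄,y₄)) ∈ (S¹×S¹)⁴ and any choices of indices i ≠ j and i′ ≠ j′ in {1,2,3,4}: f₂((x_i,y_j),(x₁,y₁),…,(x₄,y₄)) = f₂((x_{i′},y_{j′}),(x₁,y₁),…,(x₄,y₄)). -/

import Mathlib

open scoped BigOperators

/-- Orientation cocycle on the circle: +1 for positively oriented (counterclockwise)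
triples of distinct points, -1 for negatively oriented triples, 0 if two coincide. -/
noncomputable def orient (a b c : Circle) : ℝ :=
  Real.sign (((starRingEnd ℂ) ((b : ℂ) - (a : ℂ)) * ((c : ℂ) - (a : ℂ))).im)

/-- `x 0, …, x (n-1)` are positively cyclically ordered according to their numbering. -/
def PosCyclicallyOrdered {n : ℕ} (x : Fin n → Circle) : Prop :=
  ∀ i j k : Fin n, i < j → j < k → orient (x i) (x j) (x k) = 1

/-- Θ = Alt(Or₁ ∪ Or₂). -/
noncomputable def Theta (z : Fin 5 → Circle × Circle) : ℝ :=
  (1 / 120) * ∑ σ : Equiv.Perm (Fin 5),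
    ((Equiv.Perm.sign σ : ℤ) : ℝ) *
      (orient (z (σ 0)).1 (z (σ 1)).1 (z (σ 2)).1 *
        orient (z (σ 2)).2 (z (σ 3)).2 (z (σ 4)).2)


/-- An isometry of the hyperbolic plane in the Poincaré disk model: the Möbius
transformation `z ↦ (a z + b)/(b̄ z + ā)` with `|a|² - |b|² = 1` (orientation
preserving when `pres = true`), precomposed with complex conjugation when
`pres = false` (orientation reversing). -/
structure DiskIsom where
  a : ℂ
  b : ℂ
  hnorm : Complex.normSq a - Complex.normSq b = 1
  pres : Bool

namespace DiskIsom

/-- The action on the (closed) disk and its boundary circle. -/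
noncomputable def apply (g : DiskIsom) (z : ℂ) : ℂ :=
  (g.a * (if g.pres then z else (starRingEnd ℂ) z) + g.b) /
    ((starRingEnd ℂ) g.b * (if g.pres then z else (starRingEnd ℂ) z) + (starRingEnd ℂ) g.a)

/-- The boundary action on the circle `S¹ = ∂ℍ²`. -/
noncomputable def applyS (g : DiskIsom) (x : Circle) : Circle :=
  Circle.exp (Complex.arg (g.apply (x : ℂ)))

/-- The orientation sign of an isometry. -/
noncomputable def sgn (g : DiskIsom) : ℝ := if g.pres then 1 else -1

/-- The inverse isometry. -/
noncomputable def inv (g : DiskIsom) : DiskIsom where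
  a := if g.pres then (starRingEnd ℂ) g.a else g.a
  b := -g.b
  hnorm := by
    rcases g.pres with _ | _ <;>
      simp [Complex.normSq_conj, g.hnorm]
  pres := g.pres

end DiskIsom

/-- The geodesic of the hyperbolic plane (Poincaré disk model) with ideal
endpoints `u, v ∈ S¹`, as a subset of the open unit disk in `ℂ`. -/
def geodesic (u v : Circle) : Set ℂ :=
  {z | ‖z‖ < 1 ∧
    (1 + Complex.normSq z) * ((u : ℂ) + (v : ℂ)) - 2 * z
      - 2 * (u : ℂ) * (v : ℂ) * (starRingEnd ℂ) z = 0}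

/-- A cochain is alternating. -/
def Alternating {n : ℕ} {X : Type*} (f : (Fin n → X) → ℝ) : Prop :=
  ∀ (σ : Equiv.Perm (Fin n)) (z : Fin n → X),
    f (fun i => z (σ i)) = ((Equiv.Perm.sign σ : ℤ) : ℝ) * f z

/-- Invariance of a cochain on `(S¹ × S¹)^n` under the twisted (orientation-sign)
action of `H = Isom(ℍ² × ℍ²)`, expressed on the generators: pairs of isometries of
`ℍ²` acting factorwise through their boundary action, and the factor swap. -/
def HInvariant {n : ℕ} (f : (Fin n → Circle × Circle) → ℝ) : Prop :=
  (∀ (g h : DiskIsom) (z : Fin n → Circle × Circle),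
      f (fun i => (g.applyS (z i).1, h.applyS (z i).2)) = g.sgn * h.sgn * f z) ∧
  (∀ z : Fin n → Circle × Circle, f (fun i => ((z i).2, (z i).1)) = f z)

/-- The simplicial coboundary of a cochain. -/
noncomputable def cobdry {n : ℕ} {X : Type*} (f : (Fin (n + 1) → X) → ℝ) :
    (Fin (n + 2) → X) → ℝ :=
  fun z => ∑ i : Fin (n + 2), (-1 : ℝ) ^ (i : ℕ) * f (fun j => z (i.succAbove j))

open Classical in
/-- Number of distinct first coordinates of a tuple in `S¹ × S¹`. -/
noncomputable def ncard₁ {n : ℕ} (z : Fin n → Circle × Circle) : ℕ :=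
  (Finset.univ.image fun i => (z i).1).card

open Classical in
/-- Number of distinct second coordinates of a tuple in `S¹ × S¹`. -/
noncomputable def ncard₂ {n : ℕ} (z : Fin n → Circle × Circle) : ℕ :=
  (Finset.univ.image fun i => (z i).2).card



open Classical in
private lemma vanish_aux₁ (z : Fin 4 → Circle × Circle) (k : Fin 4) (v : Fin 5 → Circle × Circle)
    (h1 : ∀ m, ∃ l, l ≠ k ∧ (v m).1 = (z l).1) (h2 : ∀ m, ∃ l, (v m).2 = (z l).2) :
    ncard₁ v + ncard₂ v ≤ 7 := by
  have hS : ncard₁ v ≤ 3 := by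
    have hsub : (Finset.univ.image fun m => (v m).1) ⊆
        Finset.image (fun l => (z l).1) ({k}ᶜ : Finset (Fin 4)) := by
      intro x hx
      simp only [Finset.mem_image, Finset.mem_univ, true_and, Finset.mem_compl,
        Finset.mem_singleton] at hx ⊢
      obtain ⟨m, rfl⟩ := hx
      obtain ⟨l, hl, he⟩ := h1 m
      exact ⟨l, hl, he.symm⟩
    calc ncard₁ v ≤ _ := Finset.card_le_card hsub
      _ ≤ ({k}ᶜ : Finset (Fin 4)).card := Finset.card_image_le
      _ = 3 := by simp [Finset.card_compl]
  have hT : ncard₂ v ≤ 4 := by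
    have hsub : (Finset.univ.image fun m => (v m).2) ⊆
        Finset.image (fun l => (z l).2) (Finset.univ : Finset (Fin 4)) := by
      intro x hx
      simp only [Finset.mem_image, Finset.mem_univ, true_and] at hx ⊢
      obtain ⟨m, rfl⟩ := hx
      obtain ⟨l, he⟩ := h2 m
      exact ⟨l, he.symm⟩
    calc ncard₂ v ≤ _ := Finset.card_le_card hsub
      _ ≤ (Finset.univ : Finset (Fin 4)).card := Finset.card_image_le
      _ = 4 := by simp
  omega

open Classical in
private lemma vanish_aux₂ (z : Fin 4 → Circle × Circle) (k : Fin 4) (v : Fin 5 → Circle × Circle)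
    (h1 : ∀ m, ∃ l, (v m).1 = (z l).1) (h2 : ∀ m, ∃ l, l ≠ k ∧ (v m).2 = (z l).2) :
    ncard₁ v + ncard₂ v ≤ 7 := by
  have hS : ncard₁ v ≤ 4 := by
    have hsub : (Finset.univ.image fun m => (v m).1) ⊆
        Finset.image (fun l => (z l).1) (Finset.univ : Finset (Fin 4)) := by
      intro x hx
      simp only [Finset.mem_image, Finset.mem_univ, true_and] at hx ⊢
      obtain ⟨m, rfl⟩ := hx
      obtain ⟨l, he⟩ := h1 m
      exact ⟨l, he.symm⟩
    calc ncard₁ v ≤ _ := Finset.card_le_card hsub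
      _ ≤ (Finset.univ : Finset (Fin 4)).card := Finset.card_image_le
      _ = 4 := by simp
  have hT : ncard₂ v ≤ 3 := by
    have hsub : (Finset.univ.image fun m => (v m).2) ⊆
        Finset.image (fun l => (z l).2) ({k}ᶜ : Finset (Fin 4)) := by
      intro x hx
      simp only [Finset.mem_image, Finset.mem_univ, true_and, Finset.mem_compl,
        Finset.mem_singleton] at hx ⊢
      obtain ⟨m, rfl⟩ := hx
      obtain ⟨l, hl, he⟩ := h2 m
      exact ⟨l, hl, he.symm⟩
    calc ncard₂ v ≤ _ := Finset.card_le_card hsub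
      _ ≤ ({k}ᶜ : Finset (Fin 4)).card := Finset.card_image_le
      _ = 3 := by simp [Finset.card_compl]
  omega

private lemma prepend_step (f₂ : (Fin 5 → Circle × Circle) → ℝ)
    (hcocycle : ∀ w : Fin 6 → Circle × Circle, cobdry f₂ w = 0)
    (hvanish : ∀ z : Fin 5 → Circle × Circle, ncard₁ z + ncard₂ z ≤ 7 → f₂ z = 0)
    (z : Fin 4 → Circle × Circle) (i j i' j' : Fin 4)
    (hij : i ≠ j) (hij' : i' ≠ j') (hx1 : i ≠ j') (hx2 : i' ≠ j) :
    f₂ (Fin.cons ((z i).1, (z j).2) z) = f₂ (Fin.cons ((z i').1, (z j').2) z) := by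
  set a : Circle × Circle := ((z i).1, (z j).2) with ha
  set b : Circle × Circle := ((z i').1, (z j').2) with hb
  have dich : ∀ k : Fin 4, (i ≠ k ∧ i' ≠ k) ∨ (j ≠ k ∧ j' ≠ k) := by
    intro k
    by_cases h : i = k
    · subst h; exact Or.inr ⟨fun e => hij e.symm, fun e => hx1 e.symm⟩
    · by_cases h' : i' = k
      · subst h'; exact Or.inr ⟨fun e => hx2 e.symm, fun e => hij' e.symm⟩
      · exact Or.inl ⟨h, h'⟩
  have hv2 : f₂ ![a, b, z 1, z 2, z 3] = 0 := by
    apply hvanish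
    rcases dich 0 with ⟨hi, hi'⟩ | ⟨hj, hj'⟩
    · refine vanish_aux₁ z 0 _ (fun m => ?_) (fun m => ?_) <;> fin_cases m
      exacts [⟨i, hi, rfl⟩, ⟨i', hi', rfl⟩, ⟨1, by decide, rfl⟩, ⟨2, by decide, rfl⟩,
        ⟨3, by decide, rfl⟩, ⟨j, rfl⟩, ⟨j', rfl⟩, ⟨1, rfl⟩, ⟨2, rfl⟩, ⟨3, rfl⟩]
    · refine vanish_aux₂ z 0 _ (fun m => ?_) (fun m => ?_) <;> fin_cases m
      exacts [⟨i, rfl⟩, ⟨i', rfl⟩, ⟨1, rfl⟩, ⟨2, rfl⟩, ⟨3, rfl⟩,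
        ⟨j, hj, rfl⟩, ⟨j', hj', rfl⟩, ⟨1, by decide, rfl⟩, ⟨2, by decide, rfl⟩, ⟨3, by decide, rfl⟩]
  have hv3 : f₂ ![a, b, z 0, z 2, z 3] = 0 := by
    apply hvanish
    rcases dich 1 with ⟨hi, hi'⟩ | ⟨hj, hj'⟩
    · refine vanish_aux₁ z 1 _ (fun m => ?_) (fun m => ?_) <;> fin_cases m
      exacts [⟨i, hi, rfl⟩, ⟨i', hi', rfl⟩, ⟨0, by decide, rfl⟩, ⟨2, by decide, rfl⟩,
        ⟨3, by decide, rfl⟩, ⟨j, rfl⟩, ⟨j', rfl⟩, ⟨0, rfl⟩, ⟨2, rfl⟩, ⟨3, rfl⟩]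
    · refine vanish_aux₂ z 1 _ (fun m => ?_) (fun m => ?_) <;> fin_cases m
      exacts [⟨i, rfl⟩, ⟨i', rfl⟩, ⟨0, rfl⟩, ⟨2, rfl⟩, ⟨3, rfl⟩,
        ⟨j, hj, rfl⟩, ⟨j', hj', rfl⟩, ⟨0, by decide, rfl⟩, ⟨2, by decide, rfl⟩, ⟨3, by decide, rfl⟩]
  have hv4 : f₂ ![a, b, z 0, z 1, z 3] = 0 := by
    apply hvanish
    rcases dich 2 with ⟨hi, hi'⟩ | ⟨hj, hj'⟩
    · refine vanish_aux₁ z 2 _ (fun m => ?_) (fun m => ?_) <;> fin_cases m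
      exacts [⟨i, hi, rfl⟩, ⟨i', hi', rfl⟩, ⟨0, by decide, rfl⟩, ⟨1, by decide, rfl⟩,
        ⟨3, by decide, rfl⟩, ⟨j, rfl⟩, ⟨j', rfl⟩, ⟨0, rfl⟩, ⟨1, rfl⟩, ⟨3, rfl⟩]
    · refine vanish_aux₂ z 2 _ (fun m => ?_) (fun m => ?_) <;> fin_cases m
      exacts [⟨i, rfl⟩, ⟨i', rfl⟩, ⟨0, rfl⟩, ⟨1, rfl⟩, ⟨3, rfl⟩,
        ⟨j, hj, rfl⟩, ⟨j', hj', rfl⟩, ⟨0, by decide, rfl⟩, ⟨1, by decide, rfl⟩, ⟨3, by decide, rfl⟩]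
  have hv5 : f₂ ![a, b, z 0, z 1, z 2] = 0 := by
    apply hvanish
    rcases dich 3 with ⟨hi, hi'⟩ | ⟨hj, hj'⟩
    · refine vanish_aux₁ z 3 _ (fun m => ?_) (fun m => ?_) <;> fin_cases m
      exacts [⟨i, hi, rfl⟩, ⟨i', hi', rfl⟩, ⟨0, by decide, rfl⟩, ⟨1, by decide, rfl⟩,
        ⟨2, by decide, rfl⟩, ⟨j, rfl⟩, ⟨j', rfl⟩, ⟨0, rfl⟩, ⟨1, rfl⟩, ⟨2, rfl⟩]
    · refine vanish_aux₂ z 3 _ (fun m => ?_) (fun m => ?_) <;> fin_cases m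
      exacts [⟨i, rfl⟩, ⟨i', rfl⟩, ⟨0, rfl⟩, ⟨1, rfl⟩, ⟨2, rfl⟩,
        ⟨j, hj, rfl⟩, ⟨j', hj', rfl⟩, ⟨0, by decide, rfl⟩, ⟨1, by decide, rfl⟩, ⟨2, by decide, rfl⟩]
  have h := hcocycle ![a, b, z 0, z 1, z 2, z 3]
  rw [cobdry, Fin.sum_univ_six] at h
  have e0 : (fun m : Fin 5 => (![a, b, z 0, z 1, z 2, z 3] : Fin 6 → Circle × Circle)
      ((0 : Fin 6).succAbove m)) = ![b, z 0, z 1, z 2, z 3] := by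
    funext m; fin_cases m <;> rfl
  have e1 : (fun m : Fin 5 => (![a, b, z 0, z 1, z 2, z 3] : Fin 6 → Circle × Circle)
      ((1 : Fin 6).succAbove m)) = ![a, z 0, z 1, z 2, z 3] := by
    funext m; fin_cases m <;> rfl
  have e2 : (fun m : Fin 5 => (![a, b, z 0, z 1, z 2, z 3] : Fin 6 → Circle × Circle)
      ((2 : Fin 6).succAbove m)) = ![a, b, z 1, z 2, z 3] := by
    funext m; fin_cases m <;> rfl
  have e3 : (fun m : Fin 5 => (![a, b, z 0, z 1, z 2, z 3] : Fin 6 → Circle × Circle)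
      ((3 : Fin 6).succAbove m)) = ![a, b, z 0, z 2, z 3] := by
    funext m; fin_cases m <;> rfl
  have e4 : (fun m : Fin 5 => (![a, b, z 0, z 1, z 2, z 3] : Fin 6 → Circle × Circle)
      ((4 : Fin 6).succAbove m)) = ![a, b, z 0, z 1, z 3] := by
    funext m; fin_cases m <;> rfl
  have e5 : (fun m : Fin 5 => (![a, b, z 0, z 1, z 2, z 3] : Fin 6 → Circle × Circle)
      ((5 : Fin 6).succAbove m)) = ![a, b, z 0, z 1, z 2] := by
    funext m; fin_cases m <;> rfl
  rw [e0, e1, e2, e3, e4, e5, hv2, hv3, hv4, hv5] at h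
  simp only [show ((0 : Fin 6) : ℕ) = 0 from rfl, show ((1 : Fin 6) : ℕ) = 1 from rfl,
    show ((2 : Fin 6) : ℕ) = 2 from rfl, show ((3 : Fin 6) : ℕ) = 3 from rfl,
    show ((4 : Fin 6) : ℕ) = 4 from rfl, show ((5 : Fin 6) : ℕ) = 5 from rfl] at h
  norm_num at h
  have ea : (Fin.cons a z : Fin 5 → Circle × Circle) = ![a, z 0, z 1, z 2, z 3] := by
    funext m; fin_cases m <;> rfl
  have eb : (Fin.cons b z : Fin 5 → Circle × Circle) = ![b, z 0, z 1, z 2, z 3] := by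
    funext m; fin_cases m <;> rfl
  rw [ea, eb]
  linarith

/-- If an alternating simplicial cocycle `f₂` vanishes on all 5-tuples `z` with
`n₁(z) + n₂(z) ≤ 7`, then prepending `(x_i, y_j)` to a 4-tuple gives a value independent
of the choice of indices `i ≠ j`. -/
theorem prepend_value_independent (f₂ : (Fin 5 → Circle × Circle) → ℝ)
    (halt : Alternating f₂)
    (hcocycle : ∀ w : Fin 6 → Circle × Circle, cobdry f₂ w = 0)
    (hvanish : ∀ z : Fin 5 → Circle × Circle, ncard₁ z + ncard₂ z ≤ 7 → f₂ z = 0)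
    (z : Fin 4 → Circle × Circle) (i j i' j' : Fin 4)
    (hij : i ≠ j) (hij' : i' ≠ j') :
    f₂ (Fin.cons ((z i).1, (z j).2) z) = f₂ (Fin.cons ((z i').1, (z j').2) z) := by
  obtain ⟨p, hp⟩ : ∃ p : Fin 4, p ∉ ({j, j'} : Finset (Fin 4)) := by
    by_contra hc
    push_neg at hc
    have hsub : (Finset.univ : Finset (Fin 4)) ⊆ {j, j'} := fun x _ => hc x
    have h4 := Finset.card_le_card hsub
    have h2 : ({j, j'} : Finset (Fin 4)).card ≤ 2 :=
      (Finset.card_insert_le _ _).trans (by simp)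
    simp [Finset.card_univ] at h4
    omega
  obtain ⟨q, hq⟩ : ∃ q : Fin 4, q ∉ ({i, i', p} : Finset (Fin 4)) := by
    by_contra hc
    push_neg at hc
    have hsub : (Finset.univ : Finset (Fin 4)) ⊆ {i, i', p} := fun x _ => hc x
    have h4 := Finset.card_le_card hsub
    have h3 : ({i, i', p} : Finset (Fin 4)).card ≤ 3 :=
      (Finset.card_insert_le _ _).trans (by
        have := Finset.card_insert_le i' ({p} : Finset (Fin 4)); simp at this ⊢; omega)
    simp [Finset.card_univ] at h4
    omega
  simp only [Finset.mem_insert, Finset.mem_singleton, not_or] at hp hq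
  obtain ⟨hpj, hpj'⟩ := hp
  obtain ⟨hqi, hqi', hqp⟩ := hq
  have s1 := prepend_step f₂ hcocycle hvanish z i j p q hij (fun e => hqp e.symm)
    (fun e => hqi e.symm) hpj
  have s2 := prepend_step f₂ hcocycle hvanish z p q i' j' (fun e => hqp e.symm) hij'
    hpj' (fun e => hqi' e.symm)
  exact s1.trans s2
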